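/- Let a ∈ ℝ and let (P_n) and (C_n) be sequences of real numbers satisfying C_n = P_n + (6/(n(n-1))) · Σ_{k=0}^{n-2} (n-k-1)·C_k for all n ≥ 2 (with C_0, C_1 arbitrary fixed reals). If P_n = a·n + o(n), i.e. (P_n − a·n)/n → 0 as n → ∞, then C_n = (6/5)·a·n·ln n + o(n·ln n), i.e. (C_n − (6/5)·a·n·ln n)/(n·ln n) → 0 as n → ∞. -/

import Mathlib

open Filter

open Finset


namespace DPQR

noncomputable def Sf (C : ℕ → ℝ) (n : ℕ) : ℝ :=
  ∑ k ∈ Finset.range (n - 1), (((n : ℝ) - (k : ℝ) - 1) * C k)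

noncomputable def G (P : ℕ → ℝ) (j : ℕ) : ℝ :=
  ((j:ℝ)+5)*((j:ℝ)+4)*P (j+5) - 2*((j:ℝ)+4)*((j:ℝ)+3)*P (j+4) + ((j:ℝ)+3)*((j:ℝ)+2)*P (j+3)

noncomputable def g (P : ℕ → ℝ) (j : ℕ) : ℝ := G P j / (((j:ℝ)+4)*((j:ℝ)+5))

noncomputable def xx (C : ℕ → ℝ) (n : ℕ) : ℝ := C n / ((n:ℝ)+1)

noncomputable def pp (k : ℕ) : ℝ := ((k:ℝ)+2)*((k:ℝ)+3)*((k:ℝ)+4)*((k:ℝ)+5)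

noncomputable def Ph (n : ℕ) : ℝ := ((n:ℝ)+2)*((n:ℝ)+3)*((n:ℝ)+4)*((n:ℝ)+5)*((n:ℝ)+6)

noncomputable def Qh (j : ℕ) : ℝ := ((j:ℝ)+1)*((j:ℝ)+2)*((j:ℝ)+3)*((j:ℝ)+4)*((j:ℝ)+5)

variable {a : ℝ} {P C : ℕ → ℝ}

section Rec
variable (hrec : ∀ n : ℕ, 2 ≤ n →
      C n = P n + 6 / ((n : ℝ) * ((n : ℝ) - 1)) *
        ∑ k ∈ Finset.range (n - 1), (((n : ℝ) - (k : ℝ) - 1) * C k))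

include hrec

lemma L1 (n : ℕ) : (((n:ℝ)+3)*((n:ℝ)+2)) * C (n+3)
    = (((n:ℝ)+3)*((n:ℝ)+2)) * P (n+3) + 6 * Sf C (n+3) := by
  have h := hrec (n+3) (by omega)
  have h2 : ((n+3:ℕ):ℝ) * (((n+3:ℕ):ℝ) - 1) = ((n:ℝ)+3)*((n:ℝ)+2) := by push_cast; ring
  rw [Sf]
  rw [h2] at h
  have hne : ((n:ℝ)+3)*((n:ℝ)+2) ≠ 0 := by positivity
  rw [h]
  field_simp

end Rec

lemma L2 (C : ℕ → ℝ) (n : ℕ) : Sf C (n+2) - Sf C (n+1) = ∑ k ∈ range (n+1), C k := by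
  have h1 : Sf C (n+2) = ∑ k ∈ range (n+1), (((n+2:ℕ):ℝ) - (k:ℝ) - 1) * C k := by
    rw [Sf]; norm_num
  have h2 : Sf C (n+1) = ∑ k ∈ range (n+1), (((n+1:ℕ):ℝ) - (k:ℝ) - 1) * C k := by
    rw [Sf]; norm_num
    rw [Finset.sum_range_succ]
    push_cast
    simp
  rw [h1, h2, ← Finset.sum_sub_distrib]
  apply Finset.sum_congr rfl
  intro k _
  push_cast; ring

lemma L3 (C : ℕ → ℝ) (n : ℕ) : Sf C (n+3) - 2*Sf C (n+2) + Sf C (n+1) = C (n+1) := by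
  have h1 := L2 C (n+1)
  have h2 := L2 C n
  have h3 : ∑ k ∈ range (n+2), C k = ∑ k ∈ range (n+1), C k + C (n+1) :=
    Finset.sum_range_succ _ _
  have e1 : Sf C (n+1+2) = Sf C (n+3) := by norm_num
  have e2 : Sf C (n+1+1) = Sf C (n+2) := by norm_num
  rw [e1, e2] at h1
  linarith

section Rec2
variable (hrec : ∀ n : ℕ, 2 ≤ n →
      C n = P n + 6 / ((n : ℝ) * ((n : ℝ) - 1)) *
        ∑ k ∈ Finset.range (n - 1), (((n : ℝ) - (k : ℝ) - 1) * C k))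
include hrec

lemma L4 (n : ℕ) : (((n:ℝ)+4)*((n:ℝ)+5)) *
    ( ((n:ℝ)+6)*(xx C (n+5) - xx C (n+4)) - (n:ℝ)*(xx C (n+4) - xx C (n+3)) ) = G P n := by
  have k5 := L1 (P := P) (C := C) hrec (n+2)
  have k4 := L1 (P := P) (C := C) hrec (n+1)
  have k3 := L1 (P := P) (C := C) hrec n
  have l3 := L3 C (n+2)
  -- adjust indices
  have e5 : (n+2)+3 = n+5 := by omega
  have e4 : (n+1)+3 = n+4 := by omega
  have e2 : (n+2)+1 = n+3 := by omega
  rw [e5] at k5; rw [e4] at k4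
  rw [show (n+2)+3 = n+5 from rfl, show (n+2)+2 = n+4 from rfl, e2] at l3
  push_cast at k5 k4 k3
  -- express C via xx
  have cx : ∀ m : ℕ, C m = ((m:ℝ)+1) * xx C m := by
    intro m
    rw [xx]
    field_simp
  simp only [cx] at k5 k4 k3 l3
  push_cast at k5 k4 k3 l3
  rw [G]
  linear_combination k5 - 2*k4 + k3 + 6*l3


lemma gdiv (n : ℕ) : g P n
    = ((n:ℝ)+6)*(xx C (n+5) - xx C (n+4)) - (n:ℝ)*(xx C (n+4) - xx C (n+3)) := by
  rw [g, ← L4 (P := P) (C := C) hrec n]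
  exact mul_div_cancel_left₀ _ (by positivity)

lemma I1 (n : ℕ) : ((n:ℝ)+5) * xx C (n+4) - (n:ℝ) * xx C (n+3)
    = 5 * xx C 4 + ∑ j ∈ range n, g P j := by
  induction n with
  | zero => simp
  | succ m ih =>
    rw [Finset.sum_range_succ]
    have hg := gdiv (P := P) (C := C) hrec m
    push_cast
    have em : (m+1)+4 = m+5 := by omega
    have em2 : (m+1)+3 = m+4 := by omega
    rw [em, em2]
    linear_combination ih - hg

lemma I2 (n : ℕ) : Ph n * xx C (n+5)
    = 120 * xx C 4 + ∑ k ∈ range (n+1), pp k * (5 * xx C 4 + ∑ j ∈ range (k+1), g P j) := by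
  induction n with
  | zero =>
    have h := I1 (P := P) (C := C) hrec 1
    simp only [Finset.sum_range_succ, Finset.sum_range_zero] at *
    rw [Ph, pp]
    push_cast at h ⊢
    norm_num at h ⊢
    linear_combination 120 * h
  | succ m ih =>
    have h := I1 (P := P) (C := C) hrec (m+2)
    rw [Finset.sum_range_succ]
    rw [Ph, pp] at *
    push_cast at h ⊢
    have e1 : (m+2)+4 = m+6 := by omega
    have e2 : (m+2)+3 = m+5 := by omega
    have e3 : (m+1)+5 = m+6 := by omega
    have e4 : (m+1)+1 = m+2 := by omega
    rw [e1, e2] at h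
    rw [e3, e4]
    linear_combination ih + (((m:ℝ)+3)*((m:ℝ)+4)*((m:ℝ)+5)*((m:ℝ)+6)) * h

end Rec2

lemma ppPhQh (m : ℕ) : (Ph (m+1) - Qh (m+1))/5 = pp (m+1) := by
  simp only [Ph, Qh, pp]; push_cast; ring

lemma swapS (t : ℕ → ℝ) (n : ℕ) :
    ∑ k ∈ range (n+1), pp k * ∑ j ∈ range (k+1), t j
    = ∑ j ∈ range (n+1), ((Ph n - Qh j)/5) * t j := by
  induction n with
  | zero => simp only [Finset.sum_range_succ, Finset.sum_range_zero, Ph, Qh, pp]; norm_num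
  | succ m ih =>
    rw [Finset.sum_range_succ, ih,
        Finset.sum_range_succ (f := fun j => ((Ph (m+1) - Qh j)/5) * t j),
        Finset.sum_range_succ (f := t)]
    have hc : ∑ j ∈ range (m+1), ((Ph (m+1) - Qh j)/5) * t j
        = ∑ j ∈ range (m+1), (((Ph m - Qh j)/5) * t j + pp (m+1) * t j) := by
      apply Finset.sum_congr rfl
      intro j _
      simp only [Ph, pp]
      push_cast
      ring
    rw [hc, Finset.sum_add_distrib, ← Finset.mul_sum, ppPhQh]
    ring

lemma sumpp (n : ℕ) : ∑ k ∈ range (n+1), pp k = (Ph n - 120)/5 := by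
  induction n with
  | zero => simp [pp, Ph]; norm_num
  | succ m ih =>
    rw [Finset.sum_range_succ, ih, Ph, Ph, pp]
    push_cast
    ring

lemma QhgB (P : ℕ → ℝ) (j : ℕ) : Qh j * g P j = ((j:ℝ)+1)*((j:ℝ)+2)*((j:ℝ)+3) * G P j := by
  simp only [Qh, g]
  have h4 : ((j:ℝ)+4) ≠ 0 := by positivity
  have h5 : ((j:ℝ)+5) ≠ 0 := by positivity
  field_simp

section Rec3
variable (hrec : ∀ n : ℕ, 2 ≤ n →
      C n = P n + 6 / ((n : ℝ) * ((n : ℝ) - 1)) *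
        ∑ k ∈ Finset.range (n - 1), (((n : ℝ) - (k : ℝ) - 1) * C k))
include hrec

lemma I4 (n : ℕ) : Ph n * xx C (n+5)
    = Ph n * xx C 4 + (Ph n/5) * (∑ j ∈ range (n+1), g P j)
      - (1/5) * ∑ j ∈ range (n+1), ((j:ℝ)+1)*((j:ℝ)+2)*((j:ℝ)+3) * G P j := by
  have h2 := I2 (P := P) (C := C) hrec n
  have hs := swapS (g P) n
  have hp := sumpp n
  have hsplit : ∑ k ∈ range (n+1), pp k * (5 * xx C 4 + ∑ j ∈ range (k+1), g P j)
      = (∑ k ∈ range (n+1), pp k) * (5 * xx C 4)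
        + ∑ k ∈ range (n+1), pp k * ∑ j ∈ range (k+1), g P j := by
    rw [Finset.sum_mul, ← Finset.sum_add_distrib]
    apply Finset.sum_congr rfl
    intro k _
    ring
  rw [hsplit, hs, hp] at h2
  have hq : ∑ j ∈ range (n+1), ((Ph n - Qh j)/5) * g P j
      = (Ph n/5) * (∑ j ∈ range (n+1), g P j)
        - (1/5) * ∑ j ∈ range (n+1), ((j:ℝ)+1)*((j:ℝ)+2)*((j:ℝ)+3) * G P j := by
    rw [Finset.mul_sum, Finset.mul_sum, ← Finset.sum_sub_distrib]
    apply Finset.sum_congr rfl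
    intro j _
    rw [← QhgB]
    ring
  rw [hq] at h2
  linear_combination h2

end Rec3

lemma ClaimA (P : ℕ → ℝ) (n : ℕ) : ∑ j ∈ range (n+2), g P j
    = 6 * (∑ i ∈ range n, P (i+5)/(((i:ℝ)+6)*((i:ℝ)+7)))
      + P (n+6) - ((n:ℝ)+2)*P (n+5)/((n:ℝ)+6) + (3/10)*P 3 - (4/5)*P 4 := by
  induction n with
  | zero =>
    simp only [Finset.sum_range_succ, Finset.sum_range_zero, g, G]
    push_cast
    norm_num
    ring
  | succ m ih =>
    rw [Finset.sum_range_succ, ih, Finset.sum_range_succ (n := m)]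
    simp only [g, G]
    push_cast
    have e1 : (m+2)+5 = m+7 := by omega
    have e2 : (m+2)+4 = m+6 := by omega
    have e3 : (m+2)+3 = m+5 := by omega
    have e4 : (m+1)+6 = m+7 := by omega
    have e5 : (m+1)+5 = m+6 := by omega
    rw [e1, e2, e3, e4, e5]
    have h6 : ((m:ℝ)+6) ≠ 0 := by positivity
    have h7 : ((m:ℝ)+7) ≠ 0 := by positivity
    field_simp
    ring

lemma ClaimB (P : ℕ → ℝ) (n : ℕ) :
    ∑ j ∈ range (n+2), ((j:ℝ)+1)*((j:ℝ)+2)*((j:ℝ)+3) * G P j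
    = 6 * (∑ i ∈ range n, ((i:ℝ)+3)*((i:ℝ)+4)*((i:ℝ)+5)*P (i+5))
      + ((n:ℝ)+2)*((n:ℝ)+3)*((n:ℝ)+4)*((n:ℝ)+5)*((n:ℝ)+6)*P (n+6)
      - ((n:ℝ)+2)*((n:ℝ)+3)*((n:ℝ)+4)*((n:ℝ)+5)*((n:ℝ)+7)*P (n+5)
      + 36*P 3 + 144*P 4 := by
  induction n with
  | zero =>
    simp only [Finset.sum_range_succ, Finset.sum_range_zero, G]
    push_cast
    norm_num
    ring
  | succ m ih =>
    rw [Finset.sum_range_succ, ih, Finset.sum_range_succ (n := m)]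
    simp only [G]
    push_cast
    have e1 : (m+2)+5 = m+7 := by omega
    have e2 : (m+2)+4 = m+6 := by omega
    have e3 : (m+2)+3 = m+5 := by omega
    have e4 : (m+1)+6 = m+7 := by omega
    have e5 : (m+1)+5 = m+6 := by omega
    rw [e1, e2, e3, e4, e5]
    ring

section Rec4
variable (hrec : ∀ n : ℕ, 2 ≤ n →
      C n = P n + 6 / ((n : ℝ) * ((n : ℝ) - 1)) *
        ∑ k ∈ Finset.range (n - 1), (((n : ℝ) - (k : ℝ) - 1) * C k))
include hrec

lemma MASTER (n : ℕ) : C (n+6)/((n:ℝ)+7)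
    = C 4/5 + (3/50)*P 3 - (4/25)*P 4 + P (n+6)/((n:ℝ)+7)
      + (6/5) * ∑ i ∈ range n, P (i+5)/(((i:ℝ)+6)*((i:ℝ)+7))
      - (6/(5*(((n:ℝ)+3)*((n:ℝ)+4)*((n:ℝ)+5)*((n:ℝ)+6)*((n:ℝ)+7))))
          * ∑ i ∈ range n, ((i:ℝ)+3)*((i:ℝ)+4)*((i:ℝ)+5)*P (i+5)
      - (36*P 3 + 144*P 4)/(5*(((n:ℝ)+3)*((n:ℝ)+4)*((n:ℝ)+5)*((n:ℝ)+6)*((n:ℝ)+7))) := by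
  have h := I4 (P := P) (C := C) hrec (n+1)
  rw [ClaimA P n, ClaimB P n] at h
  rw [show (n+1)+5 = n+6 from by omega] at h
  have hxx6 : xx C (n+6) = C (n+6)/((n:ℝ)+7) := by
    rw [xx]; congr 1; push_cast; ring
  have hxx4 : xx C 4 = C 4 / 5 := by rw [xx]; norm_num
  rw [hxx6, hxx4] at h
  have hPh : Ph (n+1) ≠ 0 := by
    simp only [Ph]; push_cast; positivity
  have h7 : ((n:ℝ)+7) ≠ 0 := by positivity
  have h6 : ((n:ℝ)+6) ≠ 0 := by positivity
  apply mul_left_cancel₀ hPh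
  rw [h]
  simp only [Ph]
  push_cast
  field_simp
  ring

end Rec4

lemma logTendsto : Tendsto (fun n : ℕ => Real.log ((n:ℝ)+6)) atTop atTop :=
  Real.tendsto_log_atTop.comp (tendsto_atTop_add_const_right _ 6 tendsto_natCast_atTop_atTop)

lemma logpos (n : ℕ) : 0 < Real.log ((n:ℝ)+6) := by
  apply Real.log_pos
  have : (0:ℝ) ≤ (n:ℝ) := Nat.cast_nonneg n
  linarith

lemma logge1 (n : ℕ) : 1 ≤ Real.log ((n:ℝ)+6) := by
  rw [Real.le_log_iff_exp_le (by positivity)]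
  have h := Real.exp_one_lt_d9
  have : (0:ℝ) ≤ (n:ℝ) := Nat.cast_nonneg n
  linarith

lemma Hbdd {f : ℕ → ℝ} {c : ℝ} (h : ∀ᶠ n in atTop, |f n| ≤ c) :
    Tendsto (fun n => f n / Real.log ((n:ℝ)+6)) atTop (nhds 0) := by
  have hlim : Tendsto (fun n : ℕ => c / Real.log ((n:ℝ)+6)) atTop (nhds 0) :=
    Tendsto.div_atTop tendsto_const_nhds logTendsto
  refine squeeze_zero_norm' ?_ hlim
  filter_upwards [h] with n hn
  rw [norm_div, Real.norm_eq_abs, Real.norm_eq_abs, abs_of_pos (logpos n)]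
  exact (div_le_div_iff_of_pos_right (logpos n)).mpr hn

lemma logdiffsum (n : ℕ) :
    ∑ i ∈ range n, (Real.log ((i:ℝ)+7) - Real.log ((i:ℝ)+6))
      = Real.log ((n:ℝ)+6) - Real.log 6 := by
  induction n with
  | zero => norm_num
  | succ m ih =>
    rw [Finset.sum_range_succ, ih]
    push_cast
    ring

lemma hhigh (i : ℕ) : Real.log ((i:ℝ)+7) - Real.log ((i:ℝ)+6) ≤ 1/((i:ℝ)+6) := by
  have h6 : (0:ℝ) < (i:ℝ)+6 := by positivity
  have h7 : (0:ℝ) < (i:ℝ)+7 := by positivity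
  have := Real.log_le_sub_one_of_pos (x := ((i:ℝ)+7)/((i:ℝ)+6)) (by positivity)
  rw [Real.log_div (by positivity) (by positivity)] at this
  have he : ((i:ℝ)+7)/((i:ℝ)+6) - 1 = 1/((i:ℝ)+6) := by field_simp; norm_num
  linarith [he ▸ this]

lemma hlow (i : ℕ) : 1/((i:ℝ)+7) ≤ Real.log ((i:ℝ)+7) - Real.log ((i:ℝ)+6) := by
  have h6 : (0:ℝ) < (i:ℝ)+6 := by positivity
  have h7 : (0:ℝ) < (i:ℝ)+7 := by positivity
  have := Real.log_le_sub_one_of_pos (x := ((i:ℝ)+6)/((i:ℝ)+7)) (by positivity)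
  rw [Real.log_div (by positivity) (by positivity)] at this
  have he : ((i:ℝ)+6)/((i:ℝ)+7) - 1 = -(1/((i:ℝ)+7)) := by
    field_simp
    ring
  linarith [he ▸ this]

lemma tele2 (n : ℕ) :
    ∑ i ∈ range n, (1/((i:ℝ)+6) - 1/((i:ℝ)+7)) = 1/6 - 1/((n:ℝ)+6) := by
  induction n with
  | zero => norm_num
  | succ m ih =>
    rw [Finset.sum_range_succ, ih]
    push_cast
    have h6 : ((m:ℝ)+6) ≠ 0 := by positivity
    have h7 : ((m:ℝ)+7) ≠ 0 := by positivity
    field_simp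
    ring

lemma Hsum_lb (n : ℕ) :
    Real.log ((n:ℝ)+6) - Real.log 6 ≤ ∑ i ∈ range n, 1/((i:ℝ)+6) := by
  rw [← logdiffsum n]
  exact Finset.sum_le_sum (fun i _ => hhigh i)

lemma Hsum_ub (n : ℕ) :
    ∑ i ∈ range n, 1/((i:ℝ)+6) ≤ Real.log ((n:ℝ)+6) - Real.log 6 + 1/6 := by
  have h1 : ∑ i ∈ range n, 1/((i:ℝ)+7) ≤ Real.log ((n:ℝ)+6) - Real.log 6 := by
    rw [← logdiffsum n]
    exact Finset.sum_le_sum (fun i _ => hlow i)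
  have h2 : ∑ i ∈ range n, 1/((i:ℝ)+6)
      = (∑ i ∈ range n, 1/((i:ℝ)+7)) + (1/6 - 1/((n:ℝ)+6)) := by
    rw [← tele2 n, ← Finset.sum_add_distrib]
    apply Finset.sum_congr rfl
    intro i _
    ring
  have h3 : (0:ℝ) < 1/((n:ℝ)+6) := by positivity
  linarith

lemma Kbound (n : ℕ) :
    |(∑ i ∈ range n, 1/((i:ℝ)+6)) - Real.log ((n:ℝ)+6)| ≤ Real.log 6 + 1/6 := by
  have l6 : (0:ℝ) < Real.log 6 := Real.log_pos (by norm_num)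
  rw [abs_le]
  constructor
  · linarith [Hsum_lb n]
  · linarith [Hsum_ub n]

lemma AS4 : Tendsto (fun n : ℕ =>
    (∑ i ∈ range n, ((i:ℝ)+5)/(((i:ℝ)+6)*((i:ℝ)+7))) / Real.log ((n:ℝ)+6))
    atTop (nhds 1) := by
  have hsum_eq : ∀ n : ℕ, ∑ i ∈ range n, ((i:ℝ)+5)/(((i:ℝ)+6)*((i:ℝ)+7))
      = (∑ i ∈ range n, 1/((i:ℝ)+6)) - 2*(1/6 - 1/((n:ℝ)+6)) := by
    intro n
    rw [← tele2 n, Finset.mul_sum, ← Finset.sum_sub_distrib]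
    apply Finset.sum_congr rfl
    intro i _
    have h6 : ((i:ℝ)+6) ≠ 0 := by positivity
    have h7 : ((i:ℝ)+7) ≠ 0 := by positivity
    field_simp
    ring
  have t1 : Tendsto (fun n : ℕ =>
      ((∑ i ∈ range n, 1/((i:ℝ)+6)) - Real.log ((n:ℝ)+6)) / Real.log ((n:ℝ)+6))
      atTop (nhds 0) := Hbdd (Eventually.of_forall Kbound)
  have t2 : Tendsto (fun n : ℕ => (2*(1/6 - 1/((n:ℝ)+6))) / Real.log ((n:ℝ)+6))
      atTop (nhds 0) := by
    apply Hbdd (c := 1)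
    apply Eventually.of_forall
    intro n
    have h1 : (0:ℝ) < 1/((n:ℝ)+6) := by positivity
    have h2 : (1:ℝ)/((n:ℝ)+6) ≤ 1/6 := by
      apply div_le_div_of_nonneg_left (by norm_num) (by norm_num)
      have : (0:ℝ) ≤ (n:ℝ) := Nat.cast_nonneg n
      linarith
    rw [abs_le]
    constructor <;> nlinarith
  have key : ∀ n : ℕ,
      (∑ i ∈ range n, ((i:ℝ)+5)/(((i:ℝ)+6)*((i:ℝ)+7))) / Real.log ((n:ℝ)+6)
      = ((∑ i ∈ range n, 1/((i:ℝ)+6)) - Real.log ((n:ℝ)+6)) / Real.log ((n:ℝ)+6)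
        + 1 - (2*(1/6 - 1/((n:ℝ)+6))) / Real.log ((n:ℝ)+6) := by
    intro n
    rw [hsum_eq n]
    have hl : Real.log ((n:ℝ)+6) ≠ 0 := ne_of_gt (logpos n)
    field_simp
    ring
  have h := (t1.add (tendsto_const_nhds (x := (1:ℝ)))).sub t2
  have h01 : ((0:ℝ)+1)-0 = 1 := by norm_num
  rw [h01] at h
  exact h.congr (fun n => (key n).symm)

lemma AS5 (ε : ℕ → ℝ) (hε : Tendsto ε atTop (nhds 0)) :
    Tendsto (fun n : ℕ =>
      (∑ i ∈ range n, |ε i| / ((i:ℝ)+6)) / Real.log ((n:ℝ)+6)) atTop (nhds 0) := by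
  rw [Metric.tendsto_nhds]
  intro δ hδ
  obtain ⟨M, hMs⟩ := eventually_atTop.mp (Metric.tendsto_nhds.mp hε (δ/4) (by positivity))
  set Ch := ∑ i ∈ range M, |ε i| / ((i:ℝ)+6) with hCh
  have hsum_le : ∀ n, M ≤ n →
      ∑ i ∈ range n, |ε i| / ((i:ℝ)+6) ≤ Ch + (δ/2) * Real.log ((n:ℝ)+6) := by
    intro n hn
    rw [← Finset.sum_range_add_sum_Ico _ hn]
    have htail : ∑ i ∈ Finset.Ico M n, |ε i| / ((i:ℝ)+6)
        ≤ ∑ i ∈ Finset.Ico M n, (δ/4) / ((i:ℝ)+6) := by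
      apply Finset.sum_le_sum
      intro i hi
      apply div_le_div_of_nonneg_right ?_ (by positivity)
      have := hMs i (Finset.mem_Ico.mp hi).1
      rw [Real.dist_eq, sub_zero] at this
      linarith
    have htail2 : ∑ i ∈ Finset.Ico M n, (δ/4) / ((i:ℝ)+6)
        ≤ (δ/4) * ∑ i ∈ range n, 1/((i:ℝ)+6) := by
      rw [Finset.mul_sum]
      have h1 : ∑ i ∈ Finset.Ico M n, (δ/4) / ((i:ℝ)+6)
          ≤ ∑ i ∈ range n, (δ/4) / ((i:ℝ)+6) := by
        apply Finset.sum_le_sum_of_subset_of_nonneg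
        · intro i hi
          rw [Finset.mem_range]
          exact (Finset.mem_Ico.mp hi).2
        · intro i _ _
          positivity
      apply h1.trans
      apply le_of_eq
      apply Finset.sum_congr rfl
      intro i _
      rw [div_eq_mul_one_div]
    have hlog : ∑ i ∈ range n, 1/((i:ℝ)+6) ≤ 2 * Real.log ((n:ℝ)+6) := by
      have h1 := Hsum_ub n
      have l6 : (0:ℝ) < Real.log 6 := Real.log_pos (by norm_num)
      have := logge1 n
      nlinarith
    have hδ4 : (0:ℝ) ≤ δ/4 := by positivity
    calc Ch + ∑ i ∈ Finset.Ico M n, |ε i| / ((i:ℝ)+6)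
        ≤ Ch + (δ/4) * (2 * Real.log ((n:ℝ)+6)) := by
          have := htail.trans (htail2.trans (by nlinarith : (δ/4) * ∑ i ∈ range n, 1/((i:ℝ)+6) ≤ (δ/4) * (2 * Real.log ((n:ℝ)+6))))
          linarith
      _ = Ch + (δ/2) * Real.log ((n:ℝ)+6) := by ring
  have hC : Tendsto (fun n : ℕ => Ch / Real.log ((n:ℝ)+6)) atTop (nhds 0) :=
    Tendsto.div_atTop tendsto_const_nhds logTendsto
  have hCev : ∀ᶠ n : ℕ in atTop, Ch / Real.log ((n:ℝ)+6) < δ/4 :=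
    hC.eventually_lt_const (by positivity)
  filter_upwards [hCev, eventually_ge_atTop M] with n h1 h2
  rw [Real.dist_eq, sub_zero]
  have hnn : 0 ≤ ∑ i ∈ range n, |ε i| / ((i:ℝ)+6) :=
    Finset.sum_nonneg (fun i _ => by positivity)
  have hlp := logpos n
  rw [abs_of_nonneg (div_nonneg hnn hlp.le)]
  have hle := hsum_le n h2
  have hkey : (∑ i ∈ range n, |ε i| / ((i:ℝ)+6)) / Real.log ((n:ℝ)+6)
      ≤ Ch / Real.log ((n:ℝ)+6) + δ/2 := by
    rw [div_le_iff₀ hlp]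
    have hc : Ch / Real.log ((n:ℝ)+6) * Real.log ((n:ℝ)+6) = Ch :=
      div_mul_cancel₀ _ (ne_of_gt hlp)
    nlinarith [hle, hlp]
  linarith [hkey, h1, hδ]

lemma fracone (c d : ℝ) (hd : 0 < d) :
    Tendsto (fun n : ℕ => ((n:ℝ)+c)/((n:ℝ)+d)) atTop (nhds 1) := by
  have h1 : Tendsto (fun n : ℕ => (c - d)/((n:ℝ)+d)) atTop (nhds 0) :=
    Tendsto.div_atTop tendsto_const_nhds
      (tendsto_atTop_add_const_right _ d tendsto_natCast_atTop_atTop)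
  have h2 := (tendsto_const_nhds (x := (1:ℝ))).add h1
  rw [add_zero] at h2
  apply h2.congr
  intro n
  have hnd : ((n:ℝ)+d) ≠ 0 := by positivity
  field_simp
  ring

lemma Pbound (a : ℝ) (P : ℕ → ℝ)
    (hP : Tendsto (fun n : ℕ => (P n - a * (n : ℝ)) / (n : ℝ)) atTop (nhds 0)) :
    ∃ C₀ : ℝ, 0 ≤ C₀ ∧ ∀ k : ℕ, |P k| ≤ C₀ + (|a|+1) * (k:ℝ) := by
  obtain ⟨M0, hM0⟩ := eventually_atTop.mp
    (Metric.tendsto_nhds.mp hP 1 one_pos)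
  set M1 := max M0 1 with hM1
  refine ⟨∑ k ∈ range M1, |P k|, Finset.sum_nonneg (fun k _ => abs_nonneg _), ?_⟩
  intro k
  have hC₀ : (0:ℝ) ≤ ∑ k ∈ range M1, |P k| := Finset.sum_nonneg (fun k _ => abs_nonneg _)
  by_cases hk : k < M1
  · have h1 : |P k| ≤ ∑ j ∈ range M1, |P j| :=
      Finset.single_le_sum (fun j _ => abs_nonneg (P j)) (Finset.mem_range.mpr hk)
    have h2 : (0:ℝ) ≤ (|a|+1) * (k:ℝ) := by positivity
    linarith
  · push_neg at hk
    have hk1 : 1 ≤ k := le_trans (le_max_right M0 1) hk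
    have hk0 : (0:ℝ) < (k:ℝ) := by exact_mod_cast hk1
    have hq := hM0 k (le_trans (le_max_left M0 1) hk)
    rw [Real.dist_eq, sub_zero, abs_div, abs_of_pos hk0, div_lt_one hk0] at hq
    have h3 : |P k| ≤ |a * (k:ℝ)| + |P k - a * (k:ℝ)| := by
      have := abs_add_le (a * (k:ℝ)) (P k - a * (k:ℝ))
      simpa using this
    rw [abs_mul, abs_of_pos hk0] at h3
    nlinarith

lemma Phh_lb (n : ℕ) :
    ((n:ℝ)+7)^5 ≤ 243 * (((n:ℝ)+3)*((n:ℝ)+4)*((n:ℝ)+5)*((n:ℝ)+6)*((n:ℝ)+7)) := by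
  have h0 : (0:ℝ) ≤ (n:ℝ) := Nat.cast_nonneg n
  nlinarith [sq_nonneg ((n:ℝ)), sq_nonneg ((n:ℝ)+1), pow_nonneg h0 3, pow_nonneg h0 4,
    pow_nonneg h0 5, mul_nonneg h0 h0, mul_nonneg (mul_nonneg h0 h0) h0]

lemma T2bound (a : ℝ) (P : ℕ → ℝ)
    (hP : Tendsto (fun n : ℕ => (P n - a * (n : ℝ)) / (n : ℝ)) atTop (nhds 0)) :
    ∃ Cb : ℝ, ∀ n : ℕ,
      |(6/(5*(((n:ℝ)+3)*((n:ℝ)+4)*((n:ℝ)+5)*((n:ℝ)+6)*((n:ℝ)+7))))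
          * ∑ i ∈ range n, ((i:ℝ)+3)*((i:ℝ)+4)*((i:ℝ)+5)*P (i+5)|
        ≤ Cb := by
  obtain ⟨C₀, hC₀, hPb⟩ := Pbound a P hP
  set A := C₀ + (|a|+1) with hA
  have hA0 : (0:ℝ) < A := by positivity
  refine ⟨(6*243/5)*A, ?_⟩
  intro n
  have hterm : ∀ i ∈ range n, |((i:ℝ)+3)*((i:ℝ)+4)*((i:ℝ)+5)*P (i+5)|
      ≤ A * ((n:ℝ)+7)^4 := by
    intro i hi
    have hin : (i:ℝ) ≤ (n:ℝ) := by
      exact_mod_cast le_of_lt (Finset.mem_range.mp hi)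
    have h0i : (0:ℝ) ≤ (i:ℝ) := Nat.cast_nonneg i
    have hp := hPb (i+5)
    have hcast : ((i+5:ℕ):ℝ) = (i:ℝ)+5 := by push_cast; ring
    rw [hcast] at hp
    rw [abs_mul, abs_of_nonneg (by positivity : (0:ℝ) ≤ ((i:ℝ)+3)*((i:ℝ)+4)*((i:ℝ)+5))]
    have habs : |P (i+5)| ≤ A * ((n:ℝ)+7) := by
      have : C₀ + (|a|+1)*((i:ℝ)+5) ≤ A * ((n:ℝ)+7) := by
        rw [hA]
        have h1 : (0:ℝ) ≤ |a| + 1 := by positivity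
        nlinarith
      linarith
    have hprod : ((i:ℝ)+3)*((i:ℝ)+4)*((i:ℝ)+5) ≤ ((n:ℝ)+7)^3 := by
      have f1 : (i:ℝ)+3 ≤ (n:ℝ)+7 := by linarith
      have f2 : (i:ℝ)+4 ≤ (n:ℝ)+7 := by linarith
      have f3 : (i:ℝ)+5 ≤ (n:ℝ)+7 := by linarith
      calc ((i:ℝ)+3)*((i:ℝ)+4)*((i:ℝ)+5)
          ≤ (((n:ℝ)+7)*((n:ℝ)+7))*((n:ℝ)+7) := by
            apply mul_le_mul (mul_le_mul f1 f2 (by positivity) (by positivity)) f3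
              (by positivity) (by positivity)
        _ = ((n:ℝ)+7)^3 := by ring
    calc ((i:ℝ)+3)*((i:ℝ)+4)*((i:ℝ)+5) * |P (i+5)|
        ≤ ((n:ℝ)+7)^3 * (A * ((n:ℝ)+7)) := by
          apply mul_le_mul hprod habs (abs_nonneg _) (by positivity)
      _ = A * ((n:ℝ)+7)^4 := by ring
  have hsum : |∑ i ∈ range n, ((i:ℝ)+3)*((i:ℝ)+4)*((i:ℝ)+5)*P (i+5)|
      ≤ A * ((n:ℝ)+7)^5 := by
    refine (Finset.abs_sum_le_sum_abs _ _).trans ?_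
    have h1 : ∑ i ∈ range n, |((i:ℝ)+3)*((i:ℝ)+4)*((i:ℝ)+5)*P (i+5)|
        ≤ ∑ _i ∈ range n, A * ((n:ℝ)+7)^4 := Finset.sum_le_sum hterm
    rw [Finset.sum_const, Finset.card_range, nsmul_eq_mul] at h1
    have h2 : (n:ℝ) * (A * ((n:ℝ)+7)^4) ≤ ((n:ℝ)+7) * (A * ((n:ℝ)+7)^4) := by
      apply mul_le_mul_of_nonneg_right (by linarith [Nat.cast_nonneg (α := ℝ) n]) (by positivity)
    calc ∑ i ∈ range n, |((i:ℝ)+3)*((i:ℝ)+4)*((i:ℝ)+5)*P (i+5)|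
        ≤ (n:ℝ) * (A * ((n:ℝ)+7)^4) := h1
      _ ≤ ((n:ℝ)+7) * (A * ((n:ℝ)+7)^4) := h2
      _ = A * ((n:ℝ)+7)^5 := by ring
  set D := ((n:ℝ)+3)*((n:ℝ)+4)*((n:ℝ)+5)*((n:ℝ)+6)*((n:ℝ)+7) with hD
  have hDpos : (0:ℝ) < D := by rw [hD]; positivity
  rw [abs_mul, abs_of_nonneg (by positivity : (0:ℝ) ≤ 6/(5*D))]
  have hfin : 6/(5*D) * (A * ((n:ℝ)+7)^5) ≤ (6*243/5)*A := by
    rw [div_mul_eq_mul_div, div_le_iff₀ (by positivity)]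
    have h5 := Phh_lb n
    nlinarith [hA0.le]
  calc 6/(5*D) * |∑ i ∈ range n, ((i:ℝ)+3)*((i:ℝ)+4)*((i:ℝ)+5)*P (i+5)|
      ≤ 6/(5*D) * (A * ((n:ℝ)+7)^5) := by
        apply mul_le_mul_of_nonneg_left hsum (by positivity)
    _ ≤ (6*243/5)*A := hfin

end DPQR


open DPQR

/-- Solving the dual pivot quicksort recurrence with sublinear error: if the average
partitioning cost satisfies `P n = a·n + o(n)`, then the average sorting cost satisfies
`C n = (6/5)·a·n·ln n + o(n·ln n)`. -/
theorem dual_pivot_recurrence_littleO (a : ℝ) (P C : ℕ → ℝ)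
    (hrec : ∀ n : ℕ, 2 ≤ n →
      C n = P n + 6 / ((n : ℝ) * ((n : ℝ) - 1)) *
        ∑ k ∈ Finset.range (n - 1), (((n : ℝ) - (k : ℝ) - 1) * C k))
    (hP : Tendsto (fun n : ℕ => (P n - a * (n : ℝ)) / (n : ℝ)) atTop (nhds 0)) :
    Tendsto (fun n : ℕ =>
        (C n - (6 / 5) * a * (n : ℝ) * Real.log n) / ((n : ℝ) * Real.log n))
      atTop (nhds 0) := by
  classical
  -- error sequence
  set ε2 : ℕ → ℝ := fun k => (P (k+5) - a*((k:ℝ)+5))/((k:ℝ)+5) with hε2def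
  have hε2 : Tendsto ε2 atTop (nhds 0) := by
    have h := (tendsto_add_atTop_iff_nat 5).mpr hP
    apply h.congr
    intro n
    simp only [hε2def]
    push_cast
    ring
  have herr : Tendsto (fun n : ℕ =>
      (∑ i ∈ range n, (P (i+5) - a*((i:ℝ)+5))/(((i:ℝ)+6)*((i:ℝ)+7)))
        / Real.log ((n:ℝ)+6)) atTop (nhds 0) := by
    refine squeeze_zero_norm' ?_ (AS5 ε2 hε2)
    apply Eventually.of_forall
    intro n
    have hpt : ∀ i ∈ range n, |(P (i+5) - a*((i:ℝ)+5))/(((i:ℝ)+6)*((i:ℝ)+7))|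
        ≤ |ε2 i|/((i:ℝ)+6) := by
      intro i _
      have h5 : (0:ℝ) < (i:ℝ)+5 := by positivity
      have h6 : (0:ℝ) < (i:ℝ)+6 := by positivity
      have h7 : (0:ℝ) < (i:ℝ)+7 := by positivity
      have he : P (i+5) - a*((i:ℝ)+5) = ε2 i * ((i:ℝ)+5) := by
        simp only [hε2def]
        field_simp
      rw [he, abs_div, abs_mul, abs_of_pos h5,
        abs_of_pos (show (0:ℝ) < ((i:ℝ)+6)*((i:ℝ)+7) by positivity)]
      rw [div_le_div_iff₀ (by positivity) h6]
      nlinarith [abs_nonneg (ε2 i)]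
    have hnum : |∑ i ∈ range n, (P (i+5) - a*((i:ℝ)+5))/(((i:ℝ)+6)*((i:ℝ)+7))|
        ≤ ∑ i ∈ range n, |ε2 i|/((i:ℝ)+6) :=
      (Finset.abs_sum_le_sum_abs _ _).trans (Finset.sum_le_sum hpt)
    rw [Real.norm_eq_abs, abs_div, abs_of_pos (logpos n)]
    exact div_le_div_of_nonneg_right hnum (logpos n).le
  have hsplit : ∀ n : ℕ, ∑ i ∈ range n, P (i+5)/(((i:ℝ)+6)*((i:ℝ)+7))
      = a * ∑ i ∈ range n, ((i:ℝ)+5)/(((i:ℝ)+6)*((i:ℝ)+7))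
        + ∑ i ∈ range n, (P (i+5) - a*((i:ℝ)+5))/(((i:ℝ)+6)*((i:ℝ)+7)) := by
    intro n
    rw [Finset.mul_sum, ← Finset.sum_add_distrib]
    apply Finset.sum_congr rfl
    intro i _
    ring
  have h3 : Tendsto (fun n : ℕ =>
      ((6/5) * ∑ i ∈ range n, P (i+5)/(((i:ℝ)+6)*((i:ℝ)+7))) / Real.log ((n:ℝ)+6))
      atTop (nhds (6/5*a)) := by
    have hcomb := ((tendsto_const_nhds (x := (6/5*a))).mul AS4).add
      ((tendsto_const_nhds (x := (6/5:ℝ))).mul herr)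
    rw [show (6/5*a)*1 + (6/5)*0 = 6/5*a by ring] at hcomb
    apply hcomb.congr
    intro n
    rw [hsplit n]
    ring
  have hTP : Tendsto (fun n : ℕ => P (n+6)/((n:ℝ)+7)) atTop (nhds a) := by
    have hsh : Tendsto (fun n : ℕ => (P (n+6) - a*((n:ℝ)+6))/((n:ℝ)+6)) atTop (nhds 0) := by
      have h := (tendsto_add_atTop_iff_nat 6).mpr hP
      apply h.congr
      intro n
      push_cast
      ring
    have hfrac6 : Tendsto (fun n : ℕ => ((n:ℝ)+6)/((n:ℝ)+7)) atTop (nhds 1) :=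
      fracone 6 7 (by norm_num)
    have hc := (hsh.mul hfrac6).add ((tendsto_const_nhds (x := a)).mul hfrac6)
    rw [show (0:ℝ)*1 + a*1 = a by ring] at hc
    apply hc.congr
    intro n
    have h6 : ((n:ℝ)+6) ≠ 0 := by positivity
    have h7 : ((n:ℝ)+7) ≠ 0 := by positivity
    field_simp
    ring
  have h2 : Tendsto (fun n : ℕ => (P (n+6)/((n:ℝ)+7)) / Real.log ((n:ℝ)+6))
      atTop (nhds 0) := hTP.div_atTop logTendsto
  have h1 : Tendsto (fun n : ℕ =>
      (C 4/5 + (3/50)*P 3 - (4/25)*P 4) / Real.log ((n:ℝ)+6)) atTop (nhds 0) :=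
    Tendsto.div_atTop tendsto_const_nhds logTendsto
  obtain ⟨Cb, hCb⟩ := T2bound a P hP
  have h4 : Tendsto (fun n : ℕ =>
      ((6/(5*(((n:ℝ)+3)*((n:ℝ)+4)*((n:ℝ)+5)*((n:ℝ)+6)*((n:ℝ)+7))))
          * ∑ i ∈ range n, ((i:ℝ)+3)*((i:ℝ)+4)*((i:ℝ)+5)*P (i+5)) / Real.log ((n:ℝ)+6))
      atTop (nhds 0) := Hbdd (Eventually.of_forall hCb)
  have hT3b : ∀ n : ℕ,
      |(36*P 3 + 144*P 4)/(5*(((n:ℝ)+3)*((n:ℝ)+4)*((n:ℝ)+5)*((n:ℝ)+6)*((n:ℝ)+7)))|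
        ≤ |36*P 3 + 144*P 4| := by
    intro n
    have h0 : (0:ℝ) ≤ (n:ℝ) := Nat.cast_nonneg n
    have hge : (1:ℝ) ≤ 5*(((n:ℝ)+3)*((n:ℝ)+4)*((n:ℝ)+5)*((n:ℝ)+6)*((n:ℝ)+7)) := by
      have c1 : (1:ℝ)*1*1*1*1 ≤ ((n:ℝ)+3)*((n:ℝ)+4)*((n:ℝ)+5)*((n:ℝ)+6)*((n:ℝ)+7) := by
        gcongr <;> linarith
      linarith
    rw [abs_div, abs_of_pos (by positivity :
      (0:ℝ) < 5*(((n:ℝ)+3)*((n:ℝ)+4)*((n:ℝ)+5)*((n:ℝ)+6)*((n:ℝ)+7)))]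
    exact div_le_self (abs_nonneg _) hge
  have h5 : Tendsto (fun n : ℕ =>
      ((36*P 3 + 144*P 4)/(5*(((n:ℝ)+3)*((n:ℝ)+4)*((n:ℝ)+5)*((n:ℝ)+6)*((n:ℝ)+7))))
        / Real.log ((n:ℝ)+6)) atTop (nhds 0) := Hbdd (Eventually.of_forall hT3b)
  have LIM : Tendsto (fun n : ℕ => (C (n+6)/((n:ℝ)+7)) / Real.log ((n:ℝ)+6))
      atTop (nhds (6/5*a)) := by
    have H := ((((h1.add h2).add h3).sub h4).sub h5)
    rw [show (0:ℝ)+0+(6/5*a)-0-0 = 6/5*a by ring] at H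
    apply H.congr
    intro n
    rw [MASTER (P := P) (C := C) hrec n]
    ring
  refine (tendsto_add_atTop_iff_nat 6).mp ?_
  have hfrac7 : Tendsto (fun n : ℕ => ((n:ℝ)+7)/((n:ℝ)+6)) atTop (nhds 1) :=
    fracone 7 6 (by norm_num)
  have H2 := (LIM.mul hfrac7).sub (tendsto_const_nhds (x := 6/5*a))
  rw [show (6/5*a)*1 - 6/5*a = 0 by ring] at H2
  apply H2.congr
  intro n
  have hc : ((n+6:ℕ):ℝ) = (n:ℝ)+6 := by push_cast; ring
  rw [hc]
  have hlp := logpos n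
  have h6 : ((n:ℝ)+6) ≠ 0 := by positivity
  have h7 : ((n:ℝ)+7) ≠ 0 := by positivity
  field_simp
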